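/- For all n ≥ 2, the values b(n-1, j) are non-increasing in j for 1 ≤ j ≤ n-1; i.e., b(n-1, j) ≤ b(n-1, j-1) for 2 ≤ j ≤ n-1. -/

import Mathlib

/-- `F n = (a n ·, b n ·, φ n)` from the recursive construction;
    `φ 1 := 1` by convention. -/
def F : ℕ → ((ℕ → ℚ) × (ℕ → ℚ) × ℚ)
  | 0 => (fun _ => 0, fun _ => 0, 1)
  | 1 => (fun j => if j = 1 then 1 else 0, fun j => if j = 1 then 1 else 0, 1)
  | (n+2) =>
      let p := F (n+1)
      let th : ℚ := 3 * p.1 (n+1)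
      let ph : ℚ := if n = 0 then 4
        else 4 * ∑ j ∈ Finset.Icc 1 (n+1), (th * p.2.1 j - 3 * p.1 j)
      (fun j => if j = n+2 then ph else 4 * p.1 j,
       fun j => if j = n+2 then 1 else (1 + th) * p.2.1 j,
       ph)

/-- coefficient `a(n,j)` -/
def a (n j : ℕ) : ℚ := (F n).1 j
/-- coefficient `b(n,j)` -/
def b (n j : ℕ) : ℚ := (F n).2.1 j
/-- `φ(n)` -/
def phi (n : ℕ) : ℚ := (F n).2.2
/-- `θ(n) = 3·a(n-1,n-1)` -/
def theta (n : ℕ) : ℚ := 3 * a (n-1) (n-1)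

lemma a_succ (n j : ℕ) : a (n+2) j = if j = n+2 then phi (n+2) else 4 * a (n+1) j := by
  simp only [a, phi, F]

lemma b_succ (n j : ℕ) : b (n+2) j = if j = n+2 then 1 else (1 + 3 * a (n+1) (n+1)) * b (n+1) j := by
  simp only [a, b, F]

lemma phi_succ (n : ℕ) : phi (n+2) = if n = 0 then 4 else
    4 * ∑ j ∈ Finset.Icc 1 (n+1), (3 * a (n+1) (n+1) * b (n+1) j - 3 * a (n+1) j) := by
  simp only [a, b, phi, F]

lemma b_diag (n : ℕ) (hn : 1 ≤ n) : b n n = 1 := by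
  match n, hn with
  | 1, _ => simp [b, F]
  | (n+2), _ => simp [b_succ]

lemma a_diag (n : ℕ) : a (n+1) (n+1) = phi (n+1) := by
  match n with
  | 0 => simp [a, phi, F]
  | (n+1) => simp [a_succ]

lemma key : ∀ n : ℕ, 1 ≤ n →
    ((∀ j, 1 ≤ j → j ≤ n → 1 ≤ b n j ∧ 0 ≤ a n j ∧ a n j ≤ a n n) ∧
     1 ≤ a n n ∧
     (∀ j, 2 ≤ j → j ≤ n → b n j ≤ b n (j-1)) ∧
     (2 ≤ n → ∀ j, 1 ≤ j → j ≤ n - 1 → 4 ≤ b n j)) := by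
  intro n hn
  induction n, hn using Nat.le_induction with
  | base =>
    refine ⟨?_, ?_, ?_, ?_⟩
    · intro j h1 h2
      interval_cases j
      norm_num [a, b, F]
    · norm_num [a, F]
    · intro j h1 h2; omega
    · intro h; omega
  | succ n hn IH =>
    obtain ⟨m, rfl⟩ : ∃ m, n = m + 1 := ⟨n - 1, by omega⟩
    obtain ⟨IHb, IHa, IHmono, IHb4⟩ := IH
    set A : ℚ := a (m+1) (m+1) with hA
    have hA1 : 1 ≤ A := IHa
    -- φ(m+2) ≥ 4A and φ(m+2) ≥ 1
    have hphi : 4 * A ≤ phi (m+2) ∧ 1 ≤ phi (m+2) := by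
      rw [phi_succ]
      rcases Nat.eq_zero_or_pos m with hm | hm
      · subst hm
        have : A = 1 := by norm_num [hA, a, F]
        rw [this]; norm_num
      · rw [if_neg (by omega)]
        have hterm : ∀ j ∈ Finset.Icc 1 (m+1),
            (0:ℚ) ≤ 3 * A * b (m+1) j - 3 * a (m+1) j := by
          intro j hj
          simp only [Finset.mem_Icc] at hj
          obtain ⟨hb1, _, hle⟩ := IHb j hj.1 hj.2
          nlinarith
        have h1mem : 1 ∈ Finset.Icc 1 (m+1) := by simp
        have hb14 : (4:ℚ) ≤ b (m+1) 1 := IHb4 (by omega) 1 le_rfl (by omega)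
        have ht1 : 9 * A ≤ 3 * A * b (m+1) 1 - 3 * a (m+1) 1 := by
          obtain ⟨_, _, hle⟩ := IHb 1 le_rfl (by omega)
          nlinarith
        have hsum : 9 * A ≤ ∑ j ∈ Finset.Icc 1 (m+1),
            (3 * A * b (m+1) j - 3 * a (m+1) j) :=
          le_trans ht1 (Finset.single_le_sum hterm h1mem)
        constructor <;> nlinarith
    have hAd : a (m+2) (m+2) = phi (m+2) := a_diag (m+1)
    refine ⟨?_, ?_, ?_, ?_⟩
    · intro j h1 h2
      by_cases hj : j = m + 2
      · subst hj
        rw [hAd]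
        refine ⟨by rw [b_diag _ (by omega)], by linarith [hphi.2], le_rfl⟩
      · have hjm : j ≤ m + 1 := by omega
        obtain ⟨hb1, ha0, hle⟩ := IHb j h1 hjm
        rw [b_succ, a_succ, if_neg hj, if_neg hj, hAd]
        refine ⟨by nlinarith, by linarith, by nlinarith [hphi.1]⟩
    · rw [hAd]; exact le_trans (by norm_num) hphi.2
    · intro j h2 hjm2
      by_cases hj : j = m + 2
      · subst hj
        have : b (m+2) (m+1) = (1 + 3 * A) * b (m+1) (m+1) := by
          rw [b_succ, if_neg (by omega)]
        rw [show m + 2 - 1 = m + 1 from rfl, this, b_diag (m+1) (by omega),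
          b_diag (m+2) (by omega)]
        nlinarith
      · have hjm : j ≤ m + 1 := by omega
        have hmono := IHmono j h2 hjm
        have hb1 : b (m+2) j = (1 + 3 * A) * b (m+1) j := by
          rw [b_succ, if_neg hj]
        have hb2 : b (m+2) (j-1) = (1 + 3 * A) * b (m+1) (j-1) := by
          rw [b_succ, if_neg (by omega)]
        rw [hb1, hb2]
        nlinarith
    · intro _ j h1 hj
      have hjm : j ≤ m + 1 := by omega
      obtain ⟨hb1, _, _⟩ := IHb j h1 hjm
      rw [b_succ, if_neg (by omega)]
      nlinarith

theorem b_antitone (n : ℕ) (hn : 2 ≤ n) :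
    ∀ j : ℕ, 2 ≤ j → j ≤ n - 1 → b (n-1) j ≤ b (n-1) (j-1) := by
  intro j h2 hj
  exact (key (n-1) (by omega)).2.2.1 j h2 (by omega)
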